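/- Let C be a skew α-constacyclic code of length n over R with respect to θ_t of order k, where α² = 1 and α is fixed by θ_t, and let l = gcd(n, k). Then C is an α-quasi-twisted code of index l: writing codewords as m = n/l blocks of length l, if (c_{0,0},…,c_{0,l-1},…,c_{m-1,0},…,c_{m-1,l-1}) ∈ C then (αc_{m-1,0},…,αc_{m-1,l-1}, c_{0,0},…,c_{m-2,l-1}) ∈ C. -/

import Mathlib

/-- The ring `R = F + uF + vF` with `u² = u`, `v² = v`, `uv = vu = 0`,
represented as free `F`-module with basis `{1, u, v}`:
`⟨a, b, c⟩` stands for `a + u b + v c`. -/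
@[ext] structure R3 (F : Type*) where
  a : F
  b : F
  c : F

namespace R3

variable {F : Type*} [CommRing F]

instance : Zero (R3 F) := ⟨⟨0, 0, 0⟩⟩
instance : One (R3 F) := ⟨⟨1, 0, 0⟩⟩
instance : Add (R3 F) := ⟨fun x y => ⟨x.a + y.a, x.b + y.b, x.c + y.c⟩⟩
instance : Neg (R3 F) := ⟨fun x => ⟨-x.a, -x.b, -x.c⟩⟩
instance : Mul (R3 F) :=
  ⟨fun x y => ⟨x.a * y.a, x.a * y.b + x.b * y.a + x.b * y.b,
    x.a * y.c + x.c * y.a + x.c * y.c⟩⟩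

@[simp] lemma zero_a : (0 : R3 F).a = 0 := rfl
@[simp] lemma zero_b : (0 : R3 F).b = 0 := rfl
@[simp] lemma zero_c : (0 : R3 F).c = 0 := rfl
@[simp] lemma one_a : (1 : R3 F).a = 1 := rfl
@[simp] lemma one_b : (1 : R3 F).b = 0 := rfl
@[simp] lemma one_c : (1 : R3 F).c = 0 := rfl
@[simp] lemma add_a (x y : R3 F) : (x + y).a = x.a + y.a := rfl
@[simp] lemma add_b (x y : R3 F) : (x + y).b = x.b + y.b := rfl
@[simp] lemma add_c (x y : R3 F) : (x + y).c = x.c + y.c := rfl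
@[simp] lemma neg_a (x : R3 F) : (-x).a = -x.a := rfl
@[simp] lemma neg_b (x : R3 F) : (-x).b = -x.b := rfl
@[simp] lemma neg_c (x : R3 F) : (-x).c = -x.c := rfl
@[simp] lemma mul_a (x y : R3 F) : (x * y).a = x.a * y.a := rfl
@[simp] lemma mul_b (x y : R3 F) :
    (x * y).b = x.a * y.b + x.b * y.a + x.b * y.b := rfl
@[simp] lemma mul_c (x y : R3 F) :
    (x * y).c = x.a * y.c + x.c * y.a + x.c * y.c := rfl

instance : CommRing (R3 F) where
  add := (· + ·)
  zero := 0
  neg := Neg.neg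
  mul := (· * ·)
  one := 1
  add_assoc x y z := by ext <;> simp <;> ring
  zero_add x := by ext <;> simp
  add_zero x := by ext <;> simp
  add_comm x y := by ext <;> simp <;> ring
  neg_add_cancel x := by ext <;> simp
  mul_assoc x y z := by ext <;> simp <;> ring
  one_mul x := by ext <;> simp
  mul_one x := by ext <;> simp
  left_distrib x y z := by ext <;> simp <;> ring
  right_distrib x y z := by ext <;> simp <;> ring
  zero_mul x := by ext <;> simp
  mul_zero x := by ext <;> simp
  mul_comm x y := by ext <;> simp <;> ring
  nsmul := nsmulRec
  zsmul := zsmulRec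

/-- the element `u` -/
def u : R3 F := ⟨0, 1, 0⟩
/-- the element `v` -/
def v : R3 F := ⟨0, 0, 1⟩
/-- the canonical embedding of `F` into `R3 F` -/
def ofF (x : F) : R3 F := ⟨x, 0, 0⟩

instance : SMul F (R3 F) := ⟨fun r x => ⟨r * x.a, r * x.b, r * x.c⟩⟩

@[simp] lemma smul_a (r : F) (x : R3 F) : (r • x).a = r * x.a := rfl
@[simp] lemma smul_b (r : F) (x : R3 F) : (r • x).b = r * x.b := rfl
@[simp] lemma smul_c (r : F) (x : R3 F) : (r • x).c = r * x.c := rfl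

instance : Module F (R3 F) where
  one_smul x := by ext <;> simp
  mul_smul r s x := by ext <;> simp <;> ring
  smul_zero r := by ext <;> simp
  smul_add r x y := by ext <;> simp <;> ring
  add_smul r s x := by ext <;> simp <;> ring
  zero_smul x := by ext <;> simp

instance [Fintype F] : Fintype (R3 F) :=
  Fintype.ofEquiv (F × F × F)
    { toFun := fun t => ⟨t.1, t.2.1, t.2.2⟩
      invFun := fun x => (x.a, x.b, x.c)
      left_inv := fun _ => rfl
      right_inv := fun _ => rfl }

/-- the componentwise extension to `R3 F` of a map `σ : F → F`:
`a + u b + v c ↦ σ a + u (σ b) + v (σ c)`. -/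
def lift (σ : F → F) : R3 F → R3 F := fun x => ⟨σ x.a, σ x.b, σ x.c⟩

/-- the Gray map `a + u b + v c ↦ (a, a + b, a + c)`. -/
def gray (x : R3 F) : F × F × F := (x.a, x.a + x.b, x.a + x.c)

/-- the Gray map applied componentwise to vectors, with the three blocks
of length `n` arranged as a triple. -/
def grayV {n : ℕ} (x : Fin n → R3 F) :
    (Fin n → F) × (Fin n → F) × (Fin n → F) :=
  (fun i => (x i).a, fun i => (x i).a + (x i).b, fun i => (x i).a + (x i).c)

end R3

/-- the skew `α`-constacyclic shift `(c₀, …, c_{n-1}) ↦ (α θ(c_{n-1}), θ(c₀), …, θ(c_{n-2}))`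
over a ring `R` with respect to a map `θ : R → R`. -/
def tauShift {R : Type*} [Ring R] {n : ℕ} [NeZero n] (θ : R → R) (α : R)
    (c : Fin n → R) : Fin n → R :=
  fun i => (if i = 0 then α else 1) * θ (c (i - 1))

/-- first component code `C₁ = {a : a + u b + v c ∈ C}` of a code over `R3 F`. -/
def comp1 {F : Type*} [CommRing F] {n : ℕ} (C : Set (Fin n → R3 F)) :
    Set (Fin n → F) :=
  {y | ∃ x ∈ C, y = fun i => (x i).a}

/-- second component code `C₂ = {a + b : a + u b + v c ∈ C}`. -/
def comp2 {F : Type*} [CommRing F] {n : ℕ} (C : Set (Fin n → R3 F)) :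
    Set (Fin n → F) :=
  {y | ∃ x ∈ C, y = fun i => (x i).a + (x i).b}

/-- third component code `C₃ = {a + c : a + u b + v c ∈ C}`. -/
def comp3 {F : Type*} [CommRing F] {n : ℕ} (C : Set (Fin n → R3 F)) :
    Set (Fin n → F) :=
  {y | ∃ x ∈ C, y = fun i => (x i).a + (x i).c}

/-- Euclidean dual of a code over a commutative ring. -/
def dualCode {R : Type*} [CommRing R] {n : ℕ} (C : Set (Fin n → R)) :
    Set (Fin n → R) :=
  {x | ∀ y ∈ C, ∑ i, x i * y i = 0}

/-- Euclidean dual of a code of length `3n` over `F`, written as triples of blocks. -/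
def dualCode3 {F : Type*} [CommRing F] {n : ℕ}
    (S : Set ((Fin n → F) × (Fin n → F) × (Fin n → F))) :
    Set ((Fin n → F) × (Fin n → F) × (Fin n → F)) :=
  {x | ∀ y ∈ S,
    (∑ i, x.1 i * y.1 i) + (∑ i, x.2.1 i * y.2.1 i) + (∑ i, x.2.2 i * y.2.2 i) = 0}

/-- multiplication in the skew polynomial ring `R[x;θ]`, determined by
`a xⁱ * b xʲ = a θⁱ(b) x^{i+j}`. -/
noncomputable def skewMul {R : Type*} [CommRing R] (θ : R → R)
    (f g : Polynomial R) : Polynomial R :=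
  ∑ i ∈ f.support, ∑ j ∈ g.support,
    Polynomial.C (f.coeff i * θ^[i] (g.coeff j)) * Polynomial.X ^ (i + j)

/-- `f ≡ g` modulo the left ideal generated by `d` in the skew polynomial ring. -/
noncomputable def sModEq {R : Type*} [CommRing R] (θ : R → R)
    (d f g : Polynomial R) : Prop :=
  ∃ h, f - g = skewMul θ h d

/-- the substitution map `f(x) ↦ f(αx)` (with `θ(α) = α`, so `(αx)ⁱ = αⁱxⁱ`). -/
noncomputable def rhoMap {R : Type*} [CommRing R] (α : R) (f : Polynomial R) :
    Polynomial R :=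
  ∑ i ∈ f.support, Polynomial.C (f.coeff i * α ^ i) * Polynomial.X ^ i


section Aux

variable {S : Type*} [CommRing S] {n : ℕ} [NeZero n]

open Fin.NatCast

lemma sigma_iter_eq (α : S) : ∀ j, j ≤ n → ∀ c : Fin n → S,
    (tauShift (id : S → S) α)^[j] c =
      fun i : Fin n => (if (i : ℕ) < j then α else 1) * c (i - (j : Fin n)) := by
  intro j
  induction j with
  | zero =>
    intro _ c
    funext i
    simp [Nat.cast_zero]
  | succ j ih =>
    intro hj c
    obtain ⟨N, rfl⟩ : ∃ N, n = N + 1 := ⟨n - 1, by omega⟩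
    have hstep := ih (by omega) c
    funext i
    rw [Function.iterate_succ_apply', hstep]
    show (if i = 0 then α else 1) *
        ((if ((i - 1 : Fin (N+1)) : ℕ) < j then α else 1) * c (i - 1 - (j : Fin (N+1)))) = _
    have hidx : i - 1 - (j : Fin (N+1)) = i - ((j+1 : ℕ) : Fin (N+1)) := by
      push_cast
      rw [sub_sub, add_comm (1 : Fin (N+1))]
    rw [hidx, Fin.coe_sub_one]
    by_cases h0 : i = 0
    · have h1 : ¬ (N < j) := by omega
      simp [h0, h1, Nat.lt_of_lt_of_le (Nat.zero_lt_succ j) (le_refl _)]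
    · have hv : 1 ≤ (i : ℕ) := by
        have := Fin.pos_iff_ne_zero.mpr h0
        omega
      have hiff : ((i : ℕ) - 1 < j) ↔ ((i : ℕ) < j + 1) := by omega
      simp [h0, hiff]

lemma sigma_smul (α r : S) (c : Fin n → S) :
    tauShift (id : S → S) α (r • c) = r • tauShift (id : S → S) α c := by
  funext i
  simp only [tauShift, Pi.smul_apply, smul_eq_mul, id]
  ring

lemma sigma_iter_smul (α r : S) : ∀ j (c : Fin n → S),
    (tauShift (id : S → S) α)^[j] (r • c) = r • (tauShift (id : S → S) α)^[j] c := by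
  intro j
  induction j with
  | zero => intro c; rfl
  | succ j ih =>
    intro c
    rw [Function.iterate_succ_apply', Function.iterate_succ_apply', ih, sigma_smul]

lemma sigma_iter_n (α : S) (c : Fin n → S) :
    (tauShift (id : S → S) α)^[n] c = α • c := by
  rw [sigma_iter_eq α n le_rfl c]
  funext i
  simp [Fin.natCast_self, i.isLt, smul_eq_mul, Pi.smul_apply]

lemma sigma_iter_mul_n (α : S) : ∀ s (c : Fin n → S),
    (tauShift (id : S → S) α)^[s * n] c = α ^ s • c := by
  intro s
  induction s with
  | zero => intro c; simp
  | succ s ih =>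
    intro c
    have : (s + 1) * n = n + s * n := by ring
    rw [this, Function.iterate_add_apply, ih, sigma_iter_n, smul_smul, ← pow_succ']

lemma theta_sigma_comm (θ : S → S) (hθ1 : θ 1 = 1)
    (hθm : ∀ x y, θ (x * y) = θ x * θ y) (α : S) (hθα : θ α = α) (c : Fin n → S) :
    (fun i => θ (tauShift (id : S → S) α c i)) =
      tauShift (id : S → S) α (fun i => θ (c i)) := by
  funext i
  simp only [tauShift, id]
  rw [hθm]
  by_cases h : i = 0 <;> simp [h, hθα, hθ1]

lemma tau_iter (θ : S → S) (hθ1 : θ 1 = 1)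
    (hθm : ∀ x y, θ (x * y) = θ x * θ y) (α : S) (hθα : θ α = α) :
    ∀ N (c : Fin n → S), (tauShift θ α)^[N] c =
      (tauShift (id : S → S) α)^[N] (fun i => θ^[N] (c i)) := by
  have hcomm : ∀ j (d : Fin n → S),
      (fun i => θ ((tauShift (id : S → S) α)^[j] d i)) =
        (tauShift (id : S → S) α)^[j] (fun i => θ (d i)) := by
    intro j
    induction j with
    | zero => intro d; rfl
    | succ j ih =>
      intro d
      rw [Function.iterate_succ_apply', Function.iterate_succ_apply',
        theta_sigma_comm θ hθ1 hθm α hθα, ih]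
  intro N
  induction N with
  | zero => intro c; rfl
  | succ N ih =>
    intro c
    rw [Function.iterate_succ_apply' (tauShift θ α), ih]
    have h1 : tauShift θ α ((tauShift (id : S → S) α)^[N] (fun i => θ^[N] (c i)))
        = tauShift (id : S → S) α
          (fun i => θ ((tauShift (id : S → S) α)^[N] (fun i => θ^[N] (c i)) i)) := rfl
    rw [h1, hcomm N,
      show (fun i => θ (θ^[N] (c i))) = (fun i => θ^[N + 1] (c i)) from
        funext fun i => (Function.iterate_succ_apply' θ N (c i)).symm,
      ← Function.iterate_succ_apply' (tauShift (id : S → S) α)]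

end Aux

open R3 in
/-- with `l = gcd(n,k)`, a skew `α`-constacyclic code over `R` (with
`α² = 1`, `α` fixed by `θ_t` of order `k = m/t`) is an `α`-quasi-twisted code of index
`l`: it is closed under the shift by `l` positions in which the wrapped-around block is
multiplied by `α`. -/
theorem stmt18 (p m t k n : ℕ) (hp : Nat.Prime p) (hpodd : Odd p)
    (F : Type*) [Field F] [Fintype F] (hcard : Fintype.card F = p ^ m)
    (ht : t ∣ m) (htpos : 0 < t) (hk : k = m / t) [NeZero n]
    (α : R3 F) (hαsq : α ^ 2 = 1) (hαunit : IsUnit α)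
    (hαfix : R3.lift (fun a : F => a ^ p ^ t) α = α)
    (C : Submodule (R3 F) (Fin n → R3 F))
    (hC : tauShift (R3.lift (fun a : F => a ^ p ^ t)) α ''
        (C : Set (Fin n → R3 F)) = (C : Set (Fin n → R3 F))) :
    ∀ cw ∈ C,
      (fun i : Fin n => (if (i : ℕ) < Nat.gcd n k then α else 1) *
          cw (i - Fin.ofNat n (Nat.gcd n k))) ∈ C := by
  classical
  intro cw hcw
  set l := Nat.gcd n k with hl
  set qt := p ^ t with hqt
  set θ : R3 F → R3 F := R3.lift (fun a : F => a ^ qt) with hθ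
  -- basic numerics
  have hnpos : 0 < n := Nat.pos_of_ne_zero (NeZero.ne n)
  have hm : 0 < m := by
    by_contra h
    have : m = 0 := by omega
    rw [this, pow_zero] at hcard
    exact absurd hcard (Nat.ne_of_gt Fintype.one_lt_card)
  have htk : t * k = m := by rw [hk]; exact Nat.mul_div_cancel' ht
  have hkpos : 0 < k := by
    rcases Nat.eq_zero_or_pos k with h | h
    · rw [h, Nat.mul_zero] at htk; omega
    · exact h
  -- characteristic
  have hcharp : CharP F p := by
    have hc0 : ((p : F)) ^ m = 0 := by
      rw [← Nat.cast_pow, ← hcard]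
      exact FiniteField.cast_card_eq_zero F
    have hp0 : (p : F) = 0 := (pow_eq_zero_iff (by omega : m ≠ 0)).mp hc0
    have hdvd : ringChar F ∣ p := (ringChar.spec F p).mp hp0
    rcases (Nat.Prime.eq_one_or_self_of_dvd hp _ hdvd) with h1 | h1
    · exact absurd h1 (CharP.ringChar_ne_one)
    · have := ringChar.charP F
      rwa [h1] at this
  haveI : Fact (Nat.Prime p) := ⟨hp⟩
  have hqtpos : 0 < qt := pow_pos hp.pos t
  have hadd : ∀ a b : F, (a + b) ^ qt = a ^ qt + b ^ qt := fun a b =>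
    add_pow_char_pow a b p t
  -- θ is multiplicative and preserves 1
  have hθ1 : θ (1 : R3 F) = 1 := by
    ext <;> simp [hθ, R3.lift, one_pow, zero_pow hqtpos.ne']
  have hθm : ∀ x y : R3 F, θ (x * y) = θ x * θ y := by
    intro x y
    ext <;> simp [hθ, R3.lift, mul_pow, hadd]
  -- θ iterated
  have hθiter : ∀ (N : ℕ) (x : R3 F), θ^[N] x = R3.lift (fun a : F => a ^ qt ^ N) x := by
    intro N
    induction N with
    | zero => intro x; ext <;> simp [R3.lift]
    | succ N ih =>
      intro x
      rw [Function.iterate_succ_apply', ih]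
      ext <;> simp [hθ, R3.lift, ← pow_mul, pow_succ]
  have hθfix : ∀ s (x : R3 F), θ^[k * s] x = x := by
    intro s x
    rw [hθiter]
    have hq : qt ^ (k * s) = Fintype.card F ^ s := by
      rw [hqt, ← pow_mul, ← Nat.mul_assoc, htk, hcard, pow_mul]
    rw [hq]
    ext <;> simp [R3.lift, FiniteField.pow_card_pow]
  -- closure under τ iterates
  have hstep : ∀ c ∈ C, tauShift θ α c ∈ C := by
    intro c hc
    have := Set.mem_image_of_mem (tauShift θ α) hc
    rwa [hC] at this
  have hmem : ∀ N, ∀ c ∈ C, (tauShift θ α)^[N] c ∈ C := by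
    intro N
    induction N with
    | zero => intro c hc; exact hc
    | succ N ih =>
      intro c hc
      rw [Function.iterate_succ_apply]
      exact ih _ (hstep c hc)
  -- find s with k ∣ l + s * n
  obtain ⟨s, s2, hN⟩ : ∃ s s2, l + s * n = k * s2 := by
    set a := Nat.gcdA n k with ha
    set b := Nat.gcdB n k with hb
    have hbez : (l : ℤ) = n * a + k * b := Nat.gcd_eq_gcd_ab n k
    set sZ : ℤ := (k : ℤ) * a.natAbs - a with hsZ
    have hsZnn : 0 ≤ sZ := by
      have h1 : (a : ℤ) ≤ (a.natAbs : ℤ) := Int.le_natAbs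
      have hk1 : (1 : ℤ) ≤ (k : ℤ) := by exact_mod_cast hkpos
      have h2 : (a.natAbs : ℤ) ≤ (k : ℤ) * a.natAbs := by
        nlinarith [Int.natCast_nonneg a.natAbs]
      omega
    set s := sZ.toNat with hs
    have hsZval : (s : ℤ) = sZ := Int.toNat_of_nonneg hsZnn
    have hdiv : (k : ℤ) ∣ ((l : ℤ) + s * n) := by
      rw [hsZval, hsZ, hbez]
      refine ⟨n * a.natAbs + b, by ring⟩
    obtain ⟨c, hc⟩ := hdiv
    have hcnn : 0 ≤ c := by
      have hlhs : 0 ≤ (l : ℤ) + s * n := by positivity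
      rw [hc] at hlhs
      nlinarith [Int.ofNat_le.mpr hkpos]
    refine ⟨s, c.toNat, ?_⟩
    have : ((l + s * n : ℕ) : ℤ) = ((k * c.toNat : ℕ) : ℤ) := by
      push_cast
      rw [hc, Int.toNat_of_nonneg hcnn]
    exact_mod_cast this
  -- τ^[l+s*n] cw ∈ C and equals α^s • σ^[l] cw
  have h1 : (tauShift θ α)^[l + s * n] cw ∈ C := hmem _ cw hcw
  have hαfix' : θ α = α := hαfix
  rw [tau_iter θ hθ1 hθm α hαfix' (l + s * n) cw] at h1
  have hθN : (fun i => θ^[l + s * n] (cw i)) = cw := by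
    funext i
    rw [hN]
    exact hθfix s2 (cw i)
  rw [hθN] at h1
  have hsplit : (tauShift (id : R3 F → R3 F) α)^[l + s * n] cw
      = α ^ s • (tauShift (id : R3 F → R3 F) α)^[l] cw := by
    rw [Function.iterate_add_apply, sigma_iter_mul_n, sigma_iter_smul]
  rw [hsplit] at h1
  have h2 : (tauShift (id : R3 F → R3 F) α)^[l] cw ∈ C := by
    have := C.smul_mem (α ^ s) h1
    rwa [smul_smul, ← pow_add, ← two_mul, pow_mul, hαsq, one_pow, one_smul] at this
  have hlle : l ≤ n := Nat.le_of_dvd hnpos (Nat.gcd_dvd_left n k)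
  rw [sigma_iter_eq α l hlle cw] at h2
  exact h2
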